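/- Let d ≥ 1, let M′, Q, w′ be real d×d matrices with w′ invertible, and suppose that for every t ∈ [0,T] the matrix (w′)⁻¹ + 2∫₀ᵗ exp(M′s)·QᵀQ·exp((M′)ᵀs) ds is invertible. Then the function Z(t) := exp((M′)ᵀt)·((w′)⁻¹ + 2∫₀ᵗ exp(M′s)·QᵀQ·exp((M′)ᵀs) ds)⁻¹·exp(M′t) satisfies Z(0) = w′ and, for every t ∈ [0,T], Z is differentiable at t with Z′(t) = Z(t)M′ + (M′)ᵀZ(t) − 2Z(t)QᵀQZ(t). -/

import Mathlib

open Matrix NormedSpace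

attribute [local instance] Matrix.linftyOpNormedRing Matrix.linftyOpNormedAlgebra

theorem stmt_3 (d : ℕ) (hd : 1 ≤ d) (T : ℝ) (hT : 0 < T)
    (M' Q w' : Matrix (Fin d) (Fin d) ℝ)
    (hw' : IsUnit w')
    (G : ℝ → Matrix (Fin d) (Fin d) ℝ)
    (hG : ∀ t, G t = w'⁻¹ +
      (2:ℝ) • ∫ s in (0:ℝ)..t, exp (s • M') * (Qᵀ * Q) * exp (s • M'ᵀ))
    (hGinv : ∀ t ∈ Set.Icc (0:ℝ) T, IsUnit (G t))
    (Z : ℝ → Matrix (Fin d) (Fin d) ℝ)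
    (hZ : ∀ t, Z t = exp (t • M'ᵀ) * (G t)⁻¹ * exp (t • M')) :
    Z 0 = w' ∧ ∀ t ∈ Set.Icc (0:ℝ) T,
      HasDerivAt Z (Z t * M' + M'ᵀ * Z t - (2:ℝ) • (Z t * (Qᵀ * Q) * Z t)) t := by
  set f : ℝ → Matrix (Fin d) (Fin d) ℝ :=
    fun s => exp (s • M') * (Qᵀ * Q) * exp (s • M'ᵀ) with hfdef
  have hf : Continuous f := by
    apply Continuous.mul
    apply Continuous.mul
    · exact exp_continuous.comp (continuous_id.smul continuous_const)
    · exact continuous_const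
    · exact exp_continuous.comp (continuous_id.smul continuous_const)
  constructor
  · rw [hZ, hG]
    simp [Matrix.nonsing_inv_nonsing_inv _ ((Matrix.isUnit_iff_isUnit_det _).mp hw')]
  · intro t ht
    have hGu := hGinv t ht
    -- derivative of G
    have hG' : HasDerivAt G ((2:ℝ) • f t) t := by
      have h1 : HasDerivAt (fun u => ∫ s in (0:ℝ)..u, f s) (f t) t :=
        (hf.integral_hasStrictDerivAt 0 t).hasDerivAt
      have h2 := ((hasDerivAt_const t w'⁻¹).add (h1.const_smul (2:ℝ)))
      rw [show G = fun u => w'⁻¹ + (2:ℝ) • ∫ s in (0:ℝ)..u, f s from funext hG]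
      exact h2.congr_deriv (by simp)
    -- derivative of (G t)⁻¹ as Ring.inverse
    have hB : HasDerivAt (fun u => Ring.inverse (G u))
        (-(Ring.inverse (G t) * ((2:ℝ) • f t) * Ring.inverse (G t))) t := by
      obtain ⟨u, hu⟩ := hGu
      have hcoe : (↑u⁻¹ : Matrix (Fin d) (Fin d) ℝ) = Ring.inverse (G t) := by
        rw [← hu]; exact (Ring.inverse_unit u).symm
      have h3 := (hu ▸ hasFDerivAt_ringInverse (𝕜 := ℝ) u).comp_hasDerivAt t hG'
      simp only [Function.comp_def, ContinuousLinearMap.mulLeftRight_apply, hcoe] at h3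
      exact h3.congr_deriv (by simp [smul_mul_assoc, mul_smul_comm])
    have hA : HasDerivAt (fun u : ℝ => exp (u • M'ᵀ)) (M'ᵀ * exp (t • M'ᵀ)) t :=
      hasDerivAt_exp_smul_const' M'ᵀ t
    have hC : HasDerivAt (fun u : ℝ => exp (u • M')) (exp (t • M') * M') t :=
      hasDerivAt_exp_smul_const M' t
    have hD := (hA.mul hB).mul hC
    simp only [Pi.mul_apply] at hD
    have hZfun : Z = fun u => exp (u • M'ᵀ) * Ring.inverse (G u) * exp (u • M') := by
      funext u
      rw [hZ, Matrix.nonsing_inv_eq_ringInverse]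
    rw [hZfun]
    refine hD.congr_deriv ?_
    set A := exp (t • M'ᵀ)
    set B := Ring.inverse (G t)
    set C := exp (t • M')
    have hZt : (fun u => exp (u • M'ᵀ) * Ring.inverse (G u) * exp (u • M')) t
        = A * B * C := rfl
    simp only [hZt, hfdef]
    simp only [mul_add, add_mul, mul_sub, sub_mul, smul_mul_assoc, mul_smul_comm,
      mul_neg, neg_mul, sub_eq_add_neg, mul_assoc]
    abel
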